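/- Let N, M ≥ 1 and let 𝒬 ⊆ ℝ^{N×M} be a nonempty compact convex set, each element of which is row-stochastic with strictly positive entries. Then sup_{p ∈ Δ_N} inf_{Q ∈ 𝒬} I(p,Q) equals the supremum of Σ_{n=1}^N λ_n − δ*(V|𝒬) over all triples (p, λ, V) ∈ Δ_N × ℝ^N × ℝ^{N×M} satisfying, for every m ∈ {1,…,M}, Σ_{n=1}^N φ(p_n, λ_n − V_{nm}) ≤ 1 (where φ is the exponential perspective function). -/

import Mathlib

open Real
open scoped ENNReal
open Topology Filter

/-- Average mutual information `I(p,Q)`. -/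
noncomputable def AMI {N M : ℕ} (p : Fin N → ℝ) (Q : Fin N → Fin M → ℝ) : ℝ :=
  ∑ n, ∑ m, p n * Q n m * Real.log (Q n m / ∑ l, p l * Q l m)

/-- `Q` is row-stochastic with strictly positive entries. -/
def rowStochPos {N M : ℕ} (Q : Fin N → Fin M → ℝ) : Prop :=
  (∀ n m, 0 < Q n m) ∧ ∀ n, ∑ m, Q n m = 1

/-- Robust channel capacity `sup_{p ∈ Δ_N} inf_{Q ∈ 𝒬} I(p,Q)`. -/
noncomputable def robustCap {N M : ℕ} (𝒬 : Set (Fin N → Fin M → ℝ)) : ℝ :=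
  sSup { x | ∃ p ∈ stdSimplex ℝ (Fin N), x = sInf { y | ∃ Q ∈ 𝒬, y = AMI p Q } }

/-- Support function `δ*(V|𝒬)`. -/
noncomputable def suppFn {N M : ℕ} (𝒬 : Set (Fin N → Fin M → ℝ))
    (V : Fin N → Fin M → ℝ) : ℝ :=
  sSup { x | ∃ Q ∈ 𝒬, x = ∑ n, ∑ m, V n m * Q n m }

/-- Exponential perspective function `φ(p,t)`, with values in `[0,∞]`:
`φ(p,t) = p·exp(t/p)` for `p > 0`, `φ(0,t) = 0` for `t ≤ 0`, `φ(0,t) = ∞` for `t > 0`. -/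
noncomputable def persp (p t : ℝ) : ℝ≥0∞ :=
  if 0 < p then ENNReal.ofReal (p * Real.exp (t / p))
  else if t ≤ 0 then 0 else ⊤

lemma jensen_log {ι : Type*} (t : Finset ι) (w y : ι → ℝ)
    (hw : ∀ i ∈ t, 0 ≤ w i) (hw1 : ∑ i ∈ t, w i = 1)
    (hy : ∀ i ∈ t, 0 < y i) :
    ∑ i ∈ t, w i * Real.log (y i) ≤ Real.log (∑ i ∈ t, w i * y i) := by
  have := strictConcaveOn_log_Ioi.concaveOn.le_map_sum hw hw1 (fun i hi => hy i hi)
  simpa [smul_eq_mul] using this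

lemma simplex_exists_pos {N : ℕ} {p : Fin N → ℝ} (hp : p ∈ stdSimplex ℝ (Fin N)) :
    ∃ l, 0 < p l := by
  by_contra h
  push_neg at h
  have : ∑ l, p l = 0 := Finset.sum_eq_zero (fun l _ => le_antisymm (h l) (hp.1 l))
  rw [hp.2] at this; norm_num at this

lemma r_pos {N M : ℕ} {p : Fin N → ℝ} (hp : p ∈ stdSimplex ℝ (Fin N))
    {Q : Fin N → Fin M → ℝ} (hQp : ∀ n m, 0 < Q n m) (m : Fin M) :
    0 < ∑ l, p l * Q l m := by
  obtain ⟨l0, hl0⟩ := simplex_exists_pos hp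
  refine Finset.sum_pos' (fun l _ => mul_nonneg (hp.1 l) (hQp l m).le) ⟨l0, Finset.mem_univ _, mul_pos hl0 (hQp l0 m)⟩

lemma sum_r_eq_one {N M : ℕ} {p : Fin N → ℝ} (hp : p ∈ stdSimplex ℝ (Fin N))
    {Q : Fin N → Fin M → ℝ} (hQ : ∀ n, ∑ m, Q n m = 1) :
    ∑ m, ∑ l, p l * Q l m = 1 := by
  rw [Finset.sum_comm]
  calc ∑ l, ∑ m, p l * Q l m = ∑ l, p l := by
        refine Finset.sum_congr rfl (fun l _ => ?_)
        rw [← Finset.mul_sum, hQ l, mul_one]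
    _ = 1 := hp.2

lemma AMI_nonneg {N M : ℕ} {p : Fin N → ℝ} (hp : p ∈ stdSimplex ℝ (Fin N))
    {Q : Fin N → Fin M → ℝ} (hQ : rowStochPos Q) : 0 ≤ AMI p Q := by
  set r : Fin M → ℝ := fun m => ∑ l, p l * Q l m with hr_def
  have hr : ∀ m, 0 < r m := fun m => r_pos hp hQ.1 m
  have key : ∀ n m, p n * Q n m - p n * r m ≤ p n * Q n m * Real.log (Q n m / r m) := by
    intro n m
    have hx : 0 < Q n m / r m := div_pos (hQ.1 n m) (hr m)
    have h1 : Real.log (Q n m / r m)⁻¹ ≤ (Q n m / r m)⁻¹ - 1 :=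
      Real.log_le_sub_one_of_pos (inv_pos.2 hx)
    rw [Real.log_inv] at h1
    have h2 : 1 - (Q n m / r m)⁻¹ ≤ Real.log (Q n m / r m) := by linarith
    have h3 : p n * Q n m * (1 - (Q n m / r m)⁻¹) ≤ p n * Q n m * Real.log (Q n m / r m) :=
      mul_le_mul_of_nonneg_left h2 (mul_nonneg (hp.1 n) (hQ.1 n m).le)
    have h4 : p n * Q n m * (1 - (Q n m / r m)⁻¹) = p n * Q n m - p n * r m := by
      have hQne : Q n m ≠ 0 := (hQ.1 n m).ne'
      have hrne : r m ≠ 0 := (hr m).ne'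
      field_simp
    linarith
  have hsum : ∑ n, ∑ m, (p n * Q n m - p n * r m) = 0 := by
    have h1 : ∑ n, ∑ m, (p n * Q n m - p n * r m)
        = (∑ n, p n * ∑ m, Q n m) - (∑ n, p n) * (∑ m, r m) := by
      rw [Finset.sum_mul]
      rw [← Finset.sum_sub_distrib]
      refine Finset.sum_congr rfl (fun n _ => ?_)
      rw [Finset.sum_sub_distrib, Finset.mul_sum, Finset.mul_sum]
    rw [h1, sum_r_eq_one hp hQ.2, hp.2]
    simp only [one_mul, mul_one]
    calc (∑ n, p n * ∑ m, Q n m) - 1 = (∑ n, p n) - 1 := by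
          rw [Finset.sum_congr rfl (fun n _ => by rw [hQ.2 n, mul_one])]
      _ = 0 := by rw [hp.2]; ring
  calc (0:ℝ) = ∑ n, ∑ m, (p n * Q n m - p n * r m) := hsum.symm
    _ ≤ AMI p Q := by
        unfold AMI
        refine Finset.sum_le_sum (fun n _ => Finset.sum_le_sum (fun m _ => key n m))

lemma weak_duality {N M : ℕ} {p lam : Fin N → ℝ} {V Q : Fin N → Fin M → ℝ}
    (hp : p ∈ stdSimplex ℝ (Fin N)) (hQ : rowStochPos Q)
    (hc : ∀ m, ∑ n, persp (p n) (lam n - V n m) ≤ 1) :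
    ∑ n, lam n ≤ AMI p Q + ∑ n, ∑ m, V n m * Q n m := by
  set r : Fin M → ℝ := fun m => ∑ l, p l * Q l m with hr_def
  have hr : ∀ m, 0 < r m := fun m => r_pos hp hQ.1 m
  have hA0 : ∀ n m, ¬ 0 < p n → lam n - V n m ≤ 0 := by
    intro n m hpn
    by_contra hpos
    push_neg at hpos
    have hterm : persp (p n) (lam n - V n m) = ⊤ := by
      simp only [persp, if_neg hpn, if_neg (not_le.2 hpos)]
    have hle : persp (p n) (lam n - V n m) ≤ ∑ k, persp (p k) (lam k - V k m) :=
      Finset.single_le_sum (f := fun k => persp (p k) (lam k - V k m))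
        (fun k _ => zero_le) (Finset.mem_univ n)
    rw [hterm] at hle
    have := le_trans hle (hc m)
    simp at this
  set E : Fin N → Fin M → ℝ :=
    fun n m => if 0 < p n then p n * Real.exp ((lam n - V n m) / p n) else 0 with hE_def
  have hE_nonneg : ∀ n m, 0 ≤ E n m := by
    intro n m
    simp only [hE_def]
    split
    · positivity
    · exact le_refl 0
  have hA : ∀ m, ∑ n, E n m ≤ 1 := by
    intro m
    have heq : ∀ n, persp (p n) (lam n - V n m) = ENNReal.ofReal (E n m) := by
      intro n
      by_cases hpn : 0 < p n
      · simp only [persp, hE_def, if_pos hpn]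
      · simp only [persp, hE_def, if_neg hpn, if_pos (hA0 n m hpn), ENNReal.ofReal_zero]
    have hsum : ∑ n, persp (p n) (lam n - V n m) = ENNReal.ofReal (∑ n, E n m) := by
      rw [Finset.sum_congr rfl (fun n _ => heq n),
        ← ENNReal.ofReal_sum_of_nonneg (fun n _ => hE_nonneg n m)]
    have hcm := hc m
    rw [hsum] at hcm
    exact ENNReal.ofReal_le_one.1 hcm
  set S : Fin N → ℝ := fun n => ∑ m, r m * Real.exp ((lam n - V n m) / p n) with hS_def
  have hMne : (Finset.univ : Finset (Fin M)).Nonempty := by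
    rcases (Finset.univ : Finset (Fin M)).eq_empty_or_nonempty with h | h
    · exfalso
      obtain ⟨m0⟩ : Nonempty (Fin M) := by
        by_contra hh
        rw [not_nonempty_iff] at hh
        obtain ⟨n0, -⟩ := simplex_exists_pos hp
        have := hQ.2 n0
        rw [Finset.univ_eq_empty, Finset.sum_empty] at this
        norm_num at this
      exact absurd (Finset.mem_univ m0) (by rw [h]; exact Finset.notMem_empty m0)
    · exact h
  have hS_pos : ∀ n, 0 < S n :=
    fun n => Finset.sum_pos (fun m _ => mul_pos (hr m) (Real.exp_pos _)) hMne
  set c : Fin N → ℝ :=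
    fun n => lam n - (∑ m, V n m * Q n m) - ∑ m, p n * Q n m * Real.log (Q n m / r m)
    with hc_def
  set b : Fin N → ℝ := fun n => if 0 < p n then p n * Real.log (S n) else 0 with hb_def
  have hcb : ∀ n, c n ≤ b n := by
    intro n
    have hlam : lam n = ∑ m, Q n m * lam n := by
      rw [← Finset.sum_mul, hQ.2 n, one_mul]
    by_cases hpn : 0 < p n
    · -- main case
      have hpne : p n ≠ 0 := hpn.ne'
      set y : Fin M → ℝ :=
        fun m => Real.exp ((lam n - V n m) / p n) * (r m / Q n m) with hy_def
      have hy_pos : ∀ m, 0 < y m :=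
        fun m => mul_pos (Real.exp_pos _) (div_pos (hr m) (hQ.1 n m))
      have hlog_y : ∀ m, Real.log (y m)
          = (lam n - V n m) / p n - Real.log (Q n m / r m) := by
        intro m
        rw [hy_def]
        rw [Real.log_mul (Real.exp_ne_zero _) (div_pos (hr m) (hQ.1 n m)).ne',
          Real.log_exp]
        congr 1
        rw [← Real.log_inv, inv_div]
      have hterm : ∀ m, Q n m * lam n - V n m * Q n m - p n * Q n m * Real.log (Q n m / r m)
          = p n * (Q n m * Real.log (y m)) := by
        intro m
        rw [hlog_y m]
        field_simp
      have hceq : c n = p n * ∑ m, Q n m * Real.log (y m) := by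
        simp only [hc_def]
        rw [hlam, Finset.mul_sum, ← Finset.sum_sub_distrib, ← Finset.sum_sub_distrib]
        exact Finset.sum_congr rfl (fun m _ => hterm m)
      have hjen : ∑ m, Q n m * Real.log (y m) ≤ Real.log (∑ m, Q n m * y m) :=
        jensen_log Finset.univ (Q n) y (fun m _ => (hQ.1 n m).le) (hQ.2 n)
          (fun m _ => hy_pos m)
      have hQy : ∑ m, Q n m * y m = S n := by
        refine Finset.sum_congr rfl (fun m _ => ?_)
        show Q n m * (Real.exp ((lam n - V n m) / p n) * (r m / Q n m))
          = r m * Real.exp ((lam n - V n m) / p n)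
        have hQne : Q n m ≠ 0 := (hQ.1 n m).ne'
        field_simp
      have hbn : b n = p n * Real.log (S n) := by
        simp only [hb_def]
        rw [if_pos hpn]
      rw [hceq, hbn]
      rw [hQy] at hjen
      exact mul_le_mul_of_nonneg_left hjen hpn.le
    · -- p n = 0
      have hp0 : p n = 0 := le_antisymm (not_lt.1 hpn) (hp.1 n)
      have h3 : ∑ m, p n * Q n m * Real.log (Q n m / r m) = 0 := by
        refine Finset.sum_eq_zero (fun m _ => ?_)
        rw [hp0]; ring
      have h4 : lam n ≤ ∑ m, V n m * Q n m := by
        rw [hlam]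
        refine Finset.sum_le_sum (fun m _ => ?_)
        rw [mul_comm (V n m) (Q n m)]
        exact mul_le_mul_of_nonneg_left (by linarith [hA0 n m hpn]) (hQ.1 n m).le
      simp only [hc_def, hb_def, if_neg hpn]
      rw [h3]
      linarith
  -- sum of b
  set F : Finset (Fin N) := Finset.univ.filter (fun n => 0 < p n) with hF_def
  have hsum_b : ∑ n, b n = ∑ n ∈ F, p n * Real.log (S n) := by
    rw [hb_def, hF_def, Finset.sum_filter]
  have hpF : ∑ n ∈ F, p n = 1 := by
    rw [← hp.2]
    refine Finset.sum_subset (Finset.filter_subset _ _) (fun n _ hn => ?_)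
    rw [hF_def, Finset.mem_filter] at hn
    push_neg at hn
    exact le_antisymm (hn (Finset.mem_univ n)) (hp.1 n)
  have hjen2 : ∑ n ∈ F, p n * Real.log (S n) ≤ Real.log (∑ n ∈ F, p n * S n) :=
    jensen_log F p S (fun n _ => hp.1 n) hpF (fun n _ => hS_pos n)
  have hT : ∑ n ∈ F, p n * S n ≤ 1 := by
    have h1 : ∀ n ∈ F, p n * S n = ∑ m, r m * E n m := by
      intro n hn
      rw [hF_def, Finset.mem_filter] at hn
      simp only [hS_def, hE_def]
      rw [Finset.mul_sum]
      refine Finset.sum_congr rfl (fun m _ => ?_)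
      rw [if_pos hn.2]
      ring
    rw [Finset.sum_congr rfl h1, Finset.sum_comm]
    have h2 : ∀ m, ∑ n ∈ F, r m * E n m ≤ r m := by
      intro m
      rw [← Finset.mul_sum]
      have h3 : ∑ n ∈ F, E n m = ∑ n, E n m := by
        refine Finset.sum_subset (Finset.filter_subset _ _) (fun n _ hn => ?_)
        rw [hF_def, Finset.mem_filter] at hn
        push_neg at hn
        simp only [hE_def]
        exact if_neg (fun h => absurd (hn (Finset.mem_univ n)) (not_le.2 h))
      rw [h3]
      calc r m * ∑ n, E n m ≤ r m * 1 := mul_le_mul_of_nonneg_left (hA m) (hr m).le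
        _ = r m := mul_one _
    calc ∑ m, ∑ n ∈ F, r m * E n m ≤ ∑ m, r m := Finset.sum_le_sum (fun m _ => h2 m)
      _ = 1 := sum_r_eq_one hp hQ.2
  have hT0 : 0 ≤ ∑ n ∈ F, p n * S n :=
    Finset.sum_nonneg (fun n _ => mul_nonneg (hp.1 n) (hS_pos n).le)
  have hfinal : ∑ n, c n ≤ 0 := by
    calc ∑ n, c n ≤ ∑ n, b n := Finset.sum_le_sum (fun n _ => hcb n)
      _ = ∑ n ∈ F, p n * Real.log (S n) := hsum_b
      _ ≤ Real.log (∑ n ∈ F, p n * S n) := hjen2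
      _ ≤ 0 := Real.log_nonpos hT0 hT
  have hexpand : ∑ n, c n
      = (∑ n, lam n) - (∑ n, ∑ m, V n m * Q n m) - AMI p Q := by
    simp only [hc_def]
    unfold AMI
    rw [Finset.sum_sub_distrib, Finset.sum_sub_distrib]
  rw [hexpand] at hfinal
  linarith

lemma first_order {N M : ℕ} {p : Fin N → ℝ} (hp : p ∈ stdSimplex ℝ (Fin N))
    {Qs Q : Fin N → Fin M → ℝ} (hQs : ∀ n m, 0 < Qs n m) (hQ2 : ∀ n m, 0 < Q n m)
    (hmin : ∀ t ∈ Set.Icc (0:ℝ) 1,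
      AMI p Qs ≤ AMI p (fun n m => Qs n m + t * (Q n m - Qs n m))) :
    0 ≤ ∑ n, ∑ m, p n * (Q n m - Qs n m) * Real.log (Qs n m / ∑ l, p l * Qs l m) := by
  set Δ : Fin N → Fin M → ℝ := fun n m => Q n m - Qs n m with hΔ_def
  set A : Fin N → Fin M → ℝ → ℝ := fun n m t => Qs n m + t * Δ n m with hA_def
  set R : Fin M → ℝ → ℝ := fun m t => ∑ l, p l * A l m t with hR_def
  set r : Fin M → ℝ := fun m => ∑ l, p l * Qs l m with hr_def
  have hr_pos : ∀ m, 0 < r m := fun m => r_pos hp hQs m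
  have hA0 : ∀ n m, A n m 0 = Qs n m := by intro n m; simp [hA_def]
  have hR0 : ∀ m, R m 0 = r m := by
    intro m; simp only [hR_def, hr_def]
    exact Finset.sum_congr rfl (fun l _ => by rw [hA0])
  -- positivity on [0,1]
  have hApos : ∀ n m, ∀ t ∈ Set.Icc (0:ℝ) 1, 0 < A n m t := by
    intro n m t ht
    have h1 : A n m t = (1 - t) * Qs n m + t * Q n m := by simp only [hA_def, hΔ_def]; ring
    rw [h1]
    rcases eq_or_lt_of_le ht.1 with h | h
    · rw [← h]; simpa using hQs n m
    · have h2 : 0 ≤ (1 - t) * Qs n m := mul_nonneg (by linarith [ht.2]) (hQs n m).le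
      have h3 : 0 < t * Q n m := mul_pos h (hQ2 n m)
      linarith
  have hRpos : ∀ m, ∀ t ∈ Set.Icc (0:ℝ) 1, 0 < R m t := by
    intro m t ht
    exact r_pos hp (fun n m' => hApos n m' t ht) m
  -- derivative of affine maps
  have hderivA : ∀ n m, HasDerivAt (A n m) (Δ n m) 0 := by
    intro n m
    exact (hasDerivAt_mul_const (Δ n m)).const_add (Qs n m)
  have hderivR : ∀ m, HasDerivAt (R m) (∑ l, p l * Δ l m) 0 := by
    intro m
    simp only [hR_def]
    exact HasDerivAt.fun_sum (fun l _ => ((hderivA l m).const_mul (p l)))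
  -- derivative of x log x composed
  have hAlog : ∀ n m, HasDerivAt (fun t => A n m t * Real.log (A n m t))
      ((Real.log (Qs n m) + 1) * Δ n m) 0 := by
    intro n m
    have h := (Real.hasDerivAt_mul_log (x := A n m 0) (by rw [hA0]; exact (hQs n m).ne')).comp
      0 (hderivA n m)
    rw [hA0] at h
    exact h
  have hRlog : ∀ m, HasDerivAt (fun t => R m t * Real.log (R m t))
      ((Real.log (r m) + 1) * ∑ l, p l * Δ l m) 0 := by
    intro m
    have h := (Real.hasDerivAt_mul_log (x := R m 0) (by rw [hR0]; exact (hr_pos m).ne')).comp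
      0 (hderivR m)
    rw [hR0] at h
    exact h
  -- g and its derivative
  set D0 : ℝ := (∑ n, ∑ m, p n * ((Real.log (Qs n m) + 1) * Δ n m))
    - ∑ m, (Real.log (r m) + 1) * ∑ l, p l * Δ l m with hD0_def
  set g : ℝ → ℝ := fun t => (∑ n, ∑ m, p n * (A n m t * Real.log (A n m t)))
    - ∑ m, R m t * Real.log (R m t) with hg_def
  have hg_deriv : HasDerivAt g D0 0 := by
    refine HasDerivAt.sub ?_ ?_
    · exact HasDerivAt.fun_sum (fun n _ => HasDerivAt.fun_sum (fun m _ => (hAlog n m).const_mul (p n)))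
    · exact HasDerivAt.fun_sum (fun m _ => hRlog m)
  -- f = g on Icc 0 1
  set f : ℝ → ℝ := fun t => AMI p (fun n m => A n m t) with hf_def
  have hfg : ∀ t ∈ Set.Icc (0:ℝ) 1, f t = g t := by
    intro t ht
    simp only [hf_def, hg_def]
    unfold AMI
    have step1 : ∀ n m, p n * A n m t * Real.log (A n m t / ∑ l, p l * A l m t)
        = p n * (A n m t * Real.log (A n m t)) - p n * A n m t * Real.log (R m t) := by
      intro n m
      have : (∑ l, p l * A l m t) = R m t := rfl
      rw [this, Real.log_div (hApos n m t ht).ne' (hRpos m t ht).ne']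
      ring
    calc ∑ n, ∑ m, p n * A n m t * Real.log (A n m t / ∑ l, p l * A l m t)
        = ∑ n, ∑ m, (p n * (A n m t * Real.log (A n m t)) - p n * A n m t * Real.log (R m t)) :=
          Finset.sum_congr rfl (fun n _ => Finset.sum_congr rfl (fun m _ => step1 n m))
      _ = (∑ n, ∑ m, p n * (A n m t * Real.log (A n m t)))
            - ∑ n, ∑ m, p n * A n m t * Real.log (R m t) := by
          rw [← Finset.sum_sub_distrib]
          exact Finset.sum_congr rfl (fun n _ => by rw [Finset.sum_sub_distrib])
      _ = (∑ n, ∑ m, p n * (A n m t * Real.log (A n m t)))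
            - ∑ m, R m t * Real.log (R m t) := by
          congr 1
          rw [Finset.sum_comm]
          refine Finset.sum_congr rfl (fun m _ => ?_)
          rw [← Finset.sum_mul]
  -- one-sided derivative nonneg
  have hslope : 0 ≤ D0 := by
    have h1 : HasDerivWithinAt f D0 (Set.Icc 0 1) 0 :=
      (hg_deriv.hasDerivWithinAt).congr hfg (hfg 0 ⟨le_refl 0, zero_le_one⟩)
    rw [hasDerivWithinAt_iff_tendsto_slope] at h1
    have hset : Set.Icc (0:ℝ) 1 \ {0} = Set.Ioc 0 1 := Set.Icc_diff_left
    rw [hset] at h1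
    haveI hne : (𝓝[Set.Ioc (0:ℝ) 1] 0).NeBot := left_nhdsWithin_Ioc_neBot zero_lt_one
    refine ge_of_tendsto h1 ?_
    refine eventually_nhdsWithin_of_forall (fun t ht => ?_)
    have ht0 : 0 < t := ht.1
    have hft : f 0 ≤ f t := by
      have := hmin t ⟨ht0.le, ht.2⟩
      have hf0 : f 0 = AMI p Qs := by
        simp only [hf_def]
        have he : (fun n m => A n m 0) = Qs := by funext n m; exact hA0 n m
        rw [he]
      rw [hf0]
      exact this
    have : slope f 0 t = (f t - f 0) / t := by
      rw [slope_def_field, sub_zero]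
    rw [this]
    exact div_nonneg (by linarith) ht0.le
  -- identify D0 with the target
  have hD0eq : D0 = ∑ n, ∑ m, p n * Δ n m * Real.log (Qs n m / r m) := by
    have hlog : ∀ n m, Real.log (Qs n m / r m) = Real.log (Qs n m) - Real.log (r m) :=
      fun n m => Real.log_div (hQs n m).ne' (hr_pos m).ne'
    have e1 : ∑ n, ∑ m, p n * Δ n m * Real.log (Qs n m / r m)
        = (∑ n, ∑ m, p n * Δ n m * Real.log (Qs n m)) - ∑ n, ∑ m, p n * Δ n m * Real.log (r m) := by
      rw [← Finset.sum_sub_distrib]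
      refine Finset.sum_congr rfl (fun n _ => ?_)
      rw [← Finset.sum_sub_distrib]
      refine Finset.sum_congr rfl (fun m _ => ?_)
      rw [hlog n m]; ring
    have e2 : ∑ n, ∑ m, p n * ((Real.log (Qs n m) + 1) * Δ n m)
        = (∑ n, ∑ m, p n * Δ n m * Real.log (Qs n m)) + ∑ n, ∑ m, p n * Δ n m := by
      rw [← Finset.sum_add_distrib]
      refine Finset.sum_congr rfl (fun n _ => ?_)
      rw [← Finset.sum_add_distrib]
      exact Finset.sum_congr rfl (fun m _ => by ring)
    have e3 : ∑ m, (Real.log (r m) + 1) * ∑ l, p l * Δ l m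
        = (∑ n, ∑ m, p n * Δ n m * Real.log (r m)) + ∑ n, ∑ m, p n * Δ n m := by
      rw [Finset.sum_comm (f := fun n m => p n * Δ n m * Real.log (r m)),
        Finset.sum_comm (f := fun n m => p n * Δ n m)]
      rw [← Finset.sum_add_distrib]
      refine Finset.sum_congr rfl (fun m _ => ?_)
      rw [Finset.mul_sum, ← Finset.sum_add_distrib]
      exact Finset.sum_congr rfl (fun l _ => by ring)
    rw [hD0_def, e1, e2, e3]
    ring
  rw [← hD0eq]
  exact hslope

lemma AMI_continuousOn {N M : ℕ} {p : Fin N → ℝ} (hp : p ∈ stdSimplex ℝ (Fin N)) :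
    ContinuousOn (fun Q : Fin N → Fin M → ℝ => AMI p Q) {Q | ∀ n m, 0 < Q n m} := by
  unfold AMI
  refine continuousOn_finset_sum _ (fun n _ => continuousOn_finset_sum _ (fun m _ => ?_))
  have happ : Continuous fun Q : Fin N → Fin M → ℝ => Q n m :=
    (continuous_apply m).comp (continuous_apply n)
  have hr : Continuous fun Q : Fin N → Fin M → ℝ => ∑ l, p l * Q l m :=
    continuous_finset_sum _
      (fun l _ => continuous_const.mul ((continuous_apply m).comp (continuous_apply l)))
  refine ContinuousOn.mul (Continuous.continuousOn (continuous_const.mul happ)) ?_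
  refine ContinuousOn.log ?_ ?_
  · exact ContinuousOn.div happ.continuousOn hr.continuousOn
      (fun Q hQm => (r_pos hp hQm m).ne')
  · intro Q hQm
    exact (div_pos (hQm n m) (r_pos hp hQm m)).ne'

lemma exists_AMI_bound {N M : ℕ} (hN : 0 < N) (hM : 0 < M)
    {Q0 : Fin N → Fin M → ℝ} (hQ0 : rowStochPos Q0) :
    ∃ C : ℝ, ∀ p ∈ stdSimplex ℝ (Fin N), AMI p Q0 ≤ C := by
  haveI : Nonempty (Fin N) := Fin.pos_iff_nonempty.1 hN
  haveI : Nonempty (Fin M) := Fin.pos_iff_nonempty.1 hM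
  set c0 : ℝ := Finset.univ.inf' Finset.univ_nonempty
    (fun q : Fin N × Fin M => Q0 q.1 q.2) with hc0_def
  have hc0pos : 0 < c0 := by
    rw [hc0_def, Finset.lt_inf'_iff]
    exact fun q _ => hQ0.1 q.1 q.2
  have hc0le : ∀ l m, c0 ≤ Q0 l m := fun l m =>
    Finset.inf'_le _ (Finset.mem_univ ((l, m) : Fin N × Fin M))
  refine ⟨-Real.log c0, fun p hp => ?_⟩
  have hr : ∀ m, 0 < ∑ l, p l * Q0 l m := fun m => r_pos hp hQ0.1 m
  have hkey : ∀ n m, p n * Q0 n m * Real.log (Q0 n m / ∑ l, p l * Q0 l m)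
      ≤ p n * Q0 n m * (-Real.log c0) := by
    intro n m
    refine mul_le_mul_of_nonneg_left ?_ (mul_nonneg (hp.1 n) (hQ0.1 n m).le)
    have h1 : Q0 n m ≤ 1 := by
      have := Finset.single_le_sum (f := fun m' => Q0 n m') (fun m' _ => (hQ0.1 n m').le)
        (Finset.mem_univ m)
      rw [hQ0.2 n] at this
      exact this
    have h2 : c0 ≤ ∑ l, p l * Q0 l m := by
      calc c0 = c0 * 1 := (mul_one c0).symm
        _ = c0 * ∑ l, p l := by rw [hp.2]
        _ = ∑ l, c0 * p l := by rw [Finset.mul_sum]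
        _ ≤ ∑ l, p l * Q0 l m := by
            refine Finset.sum_le_sum (fun l _ => ?_)
            rw [mul_comm]
            exact mul_le_mul_of_nonneg_left (hc0le l m) (hp.1 l)
    have h3 : Q0 n m / (∑ l, p l * Q0 l m) ≤ 1 / c0 :=
      div_le_div₀ zero_le_one h1 hc0pos h2
    calc Real.log (Q0 n m / ∑ l, p l * Q0 l m) ≤ Real.log (1 / c0) :=
          Real.log_le_log (div_pos (hQ0.1 n m) (hr m)) h3
      _ = -Real.log c0 := by rw [one_div, Real.log_inv]
  calc AMI p Q0 ≤ ∑ n, ∑ m, p n * Q0 n m * (-Real.log c0) := by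
        unfold AMI
        exact Finset.sum_le_sum (fun n _ => Finset.sum_le_sum (fun m _ => hkey n m))
    _ = (∑ n, ∑ m, p n * Q0 n m) * (-Real.log c0) := by
        rw [Finset.sum_mul]
        exact Finset.sum_congr rfl (fun n _ => by rw [Finset.sum_mul])
    _ = -Real.log c0 := by
        have h4 : ∑ n, ∑ m, p n * Q0 n m = 1 := by
          have h5 : ∀ n, ∑ m, p n * Q0 n m = p n := fun n => by
            rw [← Finset.mul_sum, hQ0.2 n, mul_one]
          rw [Finset.sum_congr rfl (fun n _ => h5 n), hp.2]
        rw [h4, one_mul]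

lemma exists_dual {N M : ℕ} {𝒬 : Set (Fin N → Fin M → ℝ)}
    (hne : 𝒬.Nonempty) (hcomp : IsCompact 𝒬) (hconv : Convex ℝ 𝒬)
    (hQ : ∀ Q ∈ 𝒬, rowStochPos Q)
    {p : Fin N → ℝ} (hp : p ∈ stdSimplex ℝ (Fin N)) :
    ∃ lam : Fin N → ℝ, ∃ V : Fin N → Fin M → ℝ,
      (∀ m, ∑ n, persp (p n) (lam n - V n m) ≤ 1) ∧
      (∑ n, lam n) - suppFn 𝒬 V = sInf { y | ∃ Q ∈ 𝒬, y = AMI p Q } := by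
  obtain ⟨Qs, hQsm, hQsmin⟩ := hcomp.exists_isMinOn hne
    ((AMI_continuousOn hp).mono (fun Q hQm => (hQ Q hQm).1))
  have hmin' : ∀ Q ∈ 𝒬, AMI p Qs ≤ AMI p Q := fun Q hQm => hQsmin hQm
  have hQsPos : ∀ n m, 0 < Qs n m := (hQ Qs hQsm).1
  set r : Fin M → ℝ := fun m => ∑ l, p l * Qs l m with hr_def
  have hr_pos : ∀ m, 0 < r m := fun m => r_pos hp hQsPos m
  set V : Fin N → Fin M → ℝ := fun n m => -(p n * Real.log (Qs n m / r m)) with hV_def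
  refine ⟨0, V, ?_, ?_⟩
  · -- feasibility
    intro m
    have hterm : ∀ n, persp (p n) ((0:Fin N → ℝ) n - V n m)
        = ENNReal.ofReal (p n * Qs n m / r m) := by
      intro n
      have harg : (0:Fin N → ℝ) n - V n m = p n * Real.log (Qs n m / r m) := by
        simp [hV_def]
      rw [harg]
      by_cases hpn : 0 < p n
      · rw [persp, if_pos hpn]
        congr 1
        have h5 : p n * Real.log (Qs n m / r m) / p n = Real.log (Qs n m / r m) := by
          field_simp
        rw [h5, Real.exp_log (div_pos (hQsPos n m) (hr_pos m)), mul_div_assoc]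
      · have hp0 : p n = 0 := le_antisymm (not_lt.1 hpn) (hp.1 n)
        rw [persp, if_neg hpn, if_pos (by rw [hp0]; simp)]
        rw [hp0]
        simp
    rw [Finset.sum_congr rfl (fun n _ => hterm n),
      ← ENNReal.ofReal_sum_of_nonneg
        (fun n _ => div_nonneg (mul_nonneg (hp.1 n) (hQsPos n m).le) (hr_pos m).le)]
    have hsum : ∑ n, p n * Qs n m / r m = 1 := by
      rw [← Finset.sum_div]
      exact div_self (hr_pos m).ne'
    rw [hsum, ENNReal.ofReal_one]
  · -- value
    have hfo : ∀ Q ∈ 𝒬,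
        0 ≤ ∑ n, ∑ m, p n * (Q n m - Qs n m) * Real.log (Qs n m / r m) := by
      intro Q hQm
      refine first_order hp hQsPos (hQ Q hQm).1 (fun t ht => ?_)
      have hmem : (fun n m => Qs n m + t * (Q n m - Qs n m)) ∈ 𝒬 := by
        have heq : (fun n m => Qs n m + t * (Q n m - Qs n m))
            = (1 - t) • Qs + t • Q := by
          funext n m
          simp [Pi.smul_apply, smul_eq_mul]
          ring
        rw [heq]
        exact hconv hQsm hQm (by linarith [ht.2]) ht.1 (by ring)
      exact hmin' _ hmem
    have hbound : ∀ Q ∈ 𝒬,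
        (∑ n, ∑ m, V n m * Q n m) ≤ ∑ n, ∑ m, V n m * Qs n m := by
      intro Q hQm
      have h := hfo Q hQm
      have hexp : (∑ n, ∑ m, V n m * Qs n m) - (∑ n, ∑ m, V n m * Q n m)
          = ∑ n, ∑ m, p n * (Q n m - Qs n m) * Real.log (Qs n m / r m) := by
        rw [← Finset.sum_sub_distrib]
        refine Finset.sum_congr rfl (fun n _ => ?_)
        rw [← Finset.sum_sub_distrib]
        refine Finset.sum_congr rfl (fun m _ => ?_)
        simp only [hV_def]
        ring
      linarith
    have hsupp : suppFn 𝒬 V = ∑ n, ∑ m, V n m * Qs n m := by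
      unfold suppFn
      apply le_antisymm
      · refine csSup_le ⟨_, Qs, hQsm, rfl⟩ ?_
        rintro x ⟨Q, hQm, rfl⟩
        exact hbound Q hQm
      · refine le_csSup ⟨∑ n, ∑ m, V n m * Qs n m, ?_⟩ ⟨Qs, hQsm, rfl⟩
        rintro x ⟨Q, hQm, rfl⟩
        exact hbound Q hQm
    have hVQs : ∑ n, ∑ m, V n m * Qs n m = -AMI p Qs := by
      unfold AMI
      rw [← Finset.sum_neg_distrib]
      refine Finset.sum_congr rfl (fun n _ => ?_)
      rw [← Finset.sum_neg_distrib]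
      refine Finset.sum_congr rfl (fun m _ => ?_)
      simp only [hV_def]
      ring
    have hsInf : sInf { y | ∃ Q ∈ 𝒬, y = AMI p Q } = AMI p Qs := by
      apply le_antisymm
      · refine csInf_le ⟨AMI p Qs, ?_⟩ ⟨Qs, hQsm, rfl⟩
        rintro x ⟨Q, hQm, rfl⟩
        exact hmin' Q hQm
      · refine le_csInf ⟨AMI p Qs, Qs, hQsm, rfl⟩ ?_
        rintro x ⟨Q, hQm, rfl⟩
        exact hmin' Q hQm
    rw [hsupp, hVQs, hsInf]
    simp

theorem robust_capacity_eq_convex_reformulation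
    {N M : ℕ} (hN : 0 < N) (hM : 0 < M)
    (𝒬 : Set (Fin N → Fin M → ℝ))
    (hne : 𝒬.Nonempty) (hcomp : IsCompact 𝒬) (hconv : Convex ℝ 𝒬)
    (hQ : ∀ Q ∈ 𝒬, rowStochPos Q) :
    robustCap 𝒬 =
      sSup { x | ∃ p ∈ stdSimplex ℝ (Fin N), ∃ lam : Fin N → ℝ,
        ∃ V : Fin N → Fin M → ℝ,
          (∀ m, ∑ n, persp (p n) (lam n - V n m) ≤ 1) ∧
          x = (∑ n, lam n) - suppFn 𝒬 V } := by
  obtain ⟨Q0, hQ0m⟩ := hne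
  obtain ⟨C, hC⟩ := exists_AMI_bound hN hM (hQ Q0 hQ0m)
  set p0 : Fin N → ℝ := fun i => if i = ⟨0, hN⟩ then 1 else 0 with hp0_def
  have hp0 : p0 ∈ stdSimplex ℝ (Fin N) := by
    constructor
    · intro i; simp only [hp0_def]; split <;> norm_num
    · simp [hp0_def]
  set SL := { x | ∃ p ∈ stdSimplex ℝ (Fin N), x = sInf { y | ∃ Q ∈ 𝒬, y = AMI p Q } }
    with hSL
  set SR := { x | ∃ p ∈ stdSimplex ℝ (Fin N), ∃ lam : Fin N → ℝ,
      ∃ V : Fin N → Fin M → ℝ,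
      (∀ m, ∑ n, persp (p n) (lam n - V n m) ≤ 1) ∧
      x = (∑ n, lam n) - suppFn 𝒬 V } with hSR
  have hTne : ∀ p : Fin N → ℝ, { y | ∃ Q ∈ 𝒬, y = AMI p Q }.Nonempty :=
    fun p => ⟨AMI p Q0, Q0, hQ0m, rfl⟩
  have hTbdd : ∀ p ∈ stdSimplex ℝ (Fin N), BddBelow { y | ∃ Q ∈ 𝒬, y = AMI p Q } := by
    intro p hp
    exact ⟨0, by rintro y ⟨Q, hQm, rfl⟩; exact AMI_nonneg hp (hQ Q hQm)⟩
  have hSLne : SL.Nonempty := ⟨_, p0, hp0, rfl⟩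
  have hSLbdd : BddAbove SL := by
    refine ⟨C, ?_⟩
    rintro x ⟨p, hp, rfl⟩
    exact le_trans (csInf_le (hTbdd p hp) ⟨Q0, hQ0m, rfl⟩) (hC p hp)
  have hsuppBdd : ∀ V : Fin N → Fin M → ℝ,
      BddAbove { x | ∃ Q ∈ 𝒬, x = ∑ n, ∑ m, V n m * Q n m } := by
    intro V
    have hcont : Continuous (fun Q : Fin N → Fin M → ℝ => ∑ n, ∑ m, V n m * Q n m) :=
      continuous_finset_sum _ (fun n _ => continuous_finset_sum _
        (fun m _ => continuous_const.mul ((continuous_apply m).comp (continuous_apply n))))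
    have himg : { x | ∃ Q ∈ 𝒬, x = ∑ n, ∑ m, V n m * Q n m }
        = (fun Q : Fin N → Fin M → ℝ => ∑ n, ∑ m, V n m * Q n m) '' 𝒬 := by
      ext x
      constructor
      · rintro ⟨Q, hQm, rfl⟩; exact ⟨Q, hQm, rfl⟩
      · rintro ⟨Q, hQm, rfl⟩; exact ⟨Q, hQm, rfl⟩
    rw [himg]
    exact hcomp.bddAbove_image hcont.continuousOn
  have hSRle : ∀ x ∈ SR, x ≤ robustCap 𝒬 := by
    rintro x ⟨p, hp, lam, V, hfeas, rfl⟩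
    have h1 : ∀ Q ∈ 𝒬, (∑ n, lam n) - suppFn 𝒬 V ≤ AMI p Q := by
      intro Q hQm
      have hwd := weak_duality hp (hQ Q hQm) hfeas
      have h2 : ∑ n, ∑ m, V n m * Q n m ≤ suppFn 𝒬 V :=
        le_csSup (hsuppBdd V) ⟨Q, hQm, rfl⟩
      unfold suppFn at *
      linarith
    have h2 : (∑ n, lam n) - suppFn 𝒬 V ≤ sInf { y | ∃ Q ∈ 𝒬, y = AMI p Q } :=
      le_csInf (hTne p) (by rintro y ⟨Q, hQm, rfl⟩; exact h1 Q hQm)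
    exact h2.trans (le_csSup hSLbdd ⟨p, hp, rfl⟩)
  have hSRne : SR.Nonempty := by
    obtain ⟨lam, V, hfeas, hval⟩ := exists_dual ⟨Q0, hQ0m⟩ hcomp hconv hQ hp0
    exact ⟨_, p0, hp0, lam, V, hfeas, rfl⟩
  have hSRbdd : BddAbove SR := ⟨robustCap 𝒬, hSRle⟩
  apply le_antisymm
  · show sSup SL ≤ sSup SR
    refine csSup_le hSLne ?_
    rintro x ⟨p, hp, rfl⟩
    obtain ⟨lam, V, hfeas, hval⟩ := exists_dual ⟨Q0, hQ0m⟩ hcomp hconv hQ hp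
    rw [← hval]
    exact le_csSup hSRbdd ⟨p, hp, lam, V, hfeas, rfl⟩
  · exact csSup_le hSRne hSRle
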